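/- Let α_1, …, α_{n+2} ∈ ℕ^{n+1} be such that α_1, …, α_{n+1} form a ℚ-basis of ℚ^{n+1}, write α_{n+2} = Σ ρ_j α_j with ρ_j ∈ ℚ, and let |r| ≥ 1 be the smallest positive integer such that p_j := |r|·ρ_j ∈ ℤ for all j. Assume the (n+2)×(n+2) matrix M̃ obtained by adjoining the row (1,…,1) on top of the matrix with columns α_1,…,α_{n+2} has rank n+2. Then the two nonnegative integers A := |r| + Σ_{j: ρ_j<0} (-p_j) and B := Σ_{j: ρ_j>0} p_j are both positive and A ≠ B. -/

import Mathlib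

/-- Let `α_1,…,α_{n+2} ∈ ℕ^{n+1}` be nonzero, with `α_1,…,α_{n+1}` a ℚ-basis of `ℚ^{n+1}`,
`α_{n+2} = Σ ρ_j α_j`, `r ≥ 1` minimal such that `p_j := r·ρ_j ∈ ℤ` for all `j`, and assume
the matrix `M̃` (all-ones row adjoined on top of the matrix of columns `α_1,…,α_{n+2}`) has
rank `n+2`.  Then `A := r + Σ_{ρ_j<0}(-p_j)` and `B := Σ_{ρ_j>0} p_j` are both positive,
and `A ≠ B`. -/
theorem degrees_positive_and_distinct (n : ℕ) (α : Fin (n + 2) → Fin (n + 1) → ℕ)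
    (hα : ∀ j, α j ≠ 0)
    (hbasis : LinearIndependent ℚ (fun (j : Fin (n + 1)) (i : Fin (n + 1)) =>
      (α j.castSucc i : ℚ)))
    (ρ : Fin (n + 1) → ℚ)
    (hρ : ∀ i, (α (Fin.last (n + 1)) i : ℚ) = ∑ j, ρ j * (α j.castSucc i : ℚ))
    (r : ℕ) (hr : 0 < r)
    (p : Fin (n + 1) → ℤ) (hp : ∀ j, (p j : ℚ) = (r : ℚ) * ρ j)
    (hmin : ∀ r' : ℕ, 0 < r' → (∀ j, ∃ q : ℤ, (q : ℚ) = (r' : ℚ) * ρ j) → r ≤ r')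
    (hrank : (Matrix.of (Fin.cons (fun _ => (1 : ℚ))
        fun (i : Fin (n + 1)) (c : Fin (n + 2)) => (α c i : ℚ))).rank = n + 2) :
    0 < (r : ℤ) + ∑ j ∈ Finset.univ.filter (fun j => ρ j < 0), (-(p j)) ∧
    0 < ∑ j ∈ Finset.univ.filter (fun j => 0 < ρ j), p j ∧
    (r : ℤ) + ∑ j ∈ Finset.univ.filter (fun j => ρ j < 0), (-(p j)) ≠
      ∑ j ∈ Finset.univ.filter (fun j => 0 < ρ j), p j := by
  have hrQ : (0 : ℚ) < (r : ℚ) := by exact_mod_cast hr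
  -- sign facts
  have hpneg : ∀ j, ρ j < 0 → 0 < -(p j) := by
    intro j hj
    have : (p j : ℚ) < 0 := by rw [hp j]; exact mul_neg_of_pos_of_neg hrQ hj
    have : p j < 0 := by exact_mod_cast this
    omega
  have hppos : ∀ j, 0 < ρ j → 0 < p j := by
    intro j hj
    have : (0 : ℚ) < (p j : ℚ) := by rw [hp j]; positivity
    exact_mod_cast this
  have hpzero : ∀ j, ¬ 0 < ρ j → ¬ ρ j < 0 → p j = 0 := by
    intro j h1 h2
    have : ρ j = 0 := le_antisymm (not_lt.mp h1) (not_lt.mp h2)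
    have : (p j : ℚ) = 0 := by rw [hp j, this, mul_zero]
    exact_mod_cast this
  -- A > 0
  have hA : 0 < (r : ℤ) + ∑ j ∈ Finset.univ.filter (fun j => ρ j < 0), (-(p j)) := by
    have : (0:ℤ) ≤ ∑ j ∈ Finset.univ.filter (fun j => ρ j < 0), (-(p j)) :=
      Finset.sum_nonneg (fun j hj => le_of_lt (hpneg j (Finset.mem_filter.mp hj).2))
    have : (0:ℤ) < (r:ℤ) := by exact_mod_cast hr
    omega
  -- B > 0 : some ρ_j > 0
  have hexpos : ∃ j, 0 < ρ j := by
    by_contra hc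
    push_neg at hc
    obtain ⟨i, hi⟩ : ∃ i, α (Fin.last (n+1)) i ≠ 0 := by
      by_contra hc'
      push_neg at hc'
      exact hα (Fin.last (n+1)) (funext hc')
    have h1 : (0:ℚ) < (α (Fin.last (n+1)) i : ℚ) := by
      exact_mod_cast Nat.pos_of_ne_zero hi
    have h2 : (α (Fin.last (n+1)) i : ℚ) ≤ 0 := by
      rw [hρ i]
      exact Finset.sum_nonpos fun j _ =>
        mul_nonpos_of_nonpos_of_nonneg (hc j) (by positivity)
    linarith
  have hB : 0 < ∑ j ∈ Finset.univ.filter (fun j => 0 < ρ j), p j := by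
    obtain ⟨j0, hj0⟩ := hexpos
    exact Finset.sum_pos' (fun j hj => le_of_lt (hppos j (Finset.mem_filter.mp hj).2))
      ⟨j0, Finset.mem_filter.mpr ⟨Finset.mem_univ _, hj0⟩, hppos j0 hj0⟩
  refine ⟨hA, hB, ?_⟩
  intro hAB
  -- From A = B deduce r = ∑ p j
  have hsum : (r : ℤ) = ∑ j, p j := by
    have hsplit := Finset.sum_filter_add_sum_filter_not Finset.univ
      (fun j => 0 < ρ j) p
    have hneg : ∑ j ∈ Finset.univ.filter (fun j => ¬ 0 < ρ j), p j
        = ∑ j ∈ Finset.univ.filter (fun j => ρ j < 0), p j := by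
      refine (Finset.sum_subset ?_ ?_).symm
      · intro j hj
        simp only [Finset.mem_filter, Finset.mem_univ, true_and] at hj ⊢
        exact fun h => absurd hj (lt_asymm h)
      · intro j hj hj'
        simp only [Finset.mem_filter, Finset.mem_univ, true_and] at hj hj'
        exact hpzero j hj hj'
    rw [← hsplit, hneg, ← hAB]
    rw [Finset.sum_neg_distrib] at *
    ring
  -- hence ∑ ρ = 1
  have hsumρ : ∑ j, ρ j = 1 := by
    have : ((r : ℤ) : ℚ) = ∑ j, (p j : ℚ) := by exact_mod_cast hsum
    rw [Finset.sum_congr rfl (fun j _ => hp j), ← Finset.mul_sum] at this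
    field_simp at this
    rw [Int.cast_natCast] at this
    exact mul_left_cancel₀ (ne_of_gt hrQ) (this.symm.trans (mul_one _).symm)
  -- build a nonzero kernel vector for the matrix
  set M : Matrix (Fin (n+2)) (Fin (n+2)) ℚ := Matrix.of (Fin.cons (fun _ => (1 : ℚ))
      fun (i : Fin (n + 1)) (c : Fin (n + 2)) => (α c i : ℚ)) with hM
  set v : Fin (n+2) → ℚ := Fin.snoc ρ (-1) with hv
  have hvlast : v (Fin.last (n+1)) = -1 := by simp [hv]
  have hvcast : ∀ j : Fin (n+1), v j.castSucc = ρ j := by intro j; simp [hv]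
  have hvne : v ≠ 0 := by
    intro h
    have := congrFun h (Fin.last (n+1))
    rw [hvlast] at this
    norm_num at this
  have hker : M.mulVec v = 0 := by
    funext i
    have hmv : M.mulVec v i = ∑ c, M i c * v c := by
      simp [Matrix.mulVec, dotProduct]
    rw [Pi.zero_apply, hmv]
    rcases Fin.eq_zero_or_eq_succ i with rfl | ⟨i', rfl⟩
    · have : ∀ c, M 0 c = 1 := fun c => rfl
      simp only [this, one_mul]
      rw [Fin.sum_univ_castSucc]
      simp only [hvlast, hvcast]
      rw [hsumρ]; ring
    · have : ∀ c, M i'.succ c = (α c i' : ℚ) := fun c => rfl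
      simp only [this]
      rw [Fin.sum_univ_castSucc]
      simp only [hvlast, hvcast]
      have h1 := hρ i'
      have h2 : ∑ x, (α x.castSucc i' : ℚ) * ρ x
          = ∑ x, ρ x * (α x.castSucc i' : ℚ) := by
        exact Finset.sum_congr rfl fun x _ => mul_comm _ _
      rw [h2, ← h1]; ring
  have hdet : M.det = 0 := Matrix.exists_mulVec_eq_zero_iff.mp ⟨v, hvne, hker⟩
  -- rank < n+2 contradiction
  have hlt : M.rank < n + 2 := by
    have hunit : ¬ IsUnit M.det := by rw [hdet]; exact not_isUnit_zero
    by_contra hge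
    have hle : M.rank ≤ n + 2 := by
      simpa using M.rank_le_card_width
    have heq : M.rank = n + 2 := le_antisymm hle (not_lt.mp hge)
    -- rank = card implies mulVecLin surjective implies injective implies det unit
    have hrange : LinearMap.range M.mulVecLin = ⊤ := by
      apply Submodule.eq_top_of_finrank_eq
      rw [← Matrix.rank] at *
      rw [heq]
      simp [Module.finrank_pi]
    have hinj : Function.Injective M.mulVecLin := by
      have := LinearMap.injective_iff_surjective (f := M.mulVecLin)
      exact this.mpr (LinearMap.range_eq_top.mp hrange)
    have : v = 0 := by
      apply hinj
      simpa [Matrix.mulVecLin] using hker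
    exact hvne this
  omega
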